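/- Let (X_s) be a finite Markov chain, t ≥ 1, A a set, α > 0, and x a state with P^t(x,A) < π(A) - (α + ε) for some ε > 0 with π(A) - α ≤ 1. Define B_s = {y : P^{t-s}(y,A) > π(A) - α} for s < t and B_s = Ω (the whole state space) for s ≥ t, and let τ_B = inf{s ≥ 0 : X_s ∈ B_s}. If θ ∈ (0,1) satisfies (π(A) - α)(1 - θ) > π(A) - (α + ε), then max_z E_z[τ_B] > θ t. -/

import Mathlib

open scoped ENNReal Classical

/-- `surv P x A t y` is the probability that the chain with transition matrix `P`,
started at `x`, has avoided the moving target `(A s)` at all times `s ≤ t` and is at `y`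
at time `t`.  Thus `∑ y, surv P x A t y = P_x(τ_A > t)`. -/
noncomputable def surv {S : Type*} [Fintype S] [DecidableEq S]
    (P : Matrix S S ℝ≥0∞) (x : S) (A : ℕ → Finset S) : ℕ → S → ℝ≥0∞
  | 0 => fun y => if y = x ∧ y ∉ A 0 then 1 else 0
  | t + 1 => fun y => if y ∈ A (t + 1) then 0 else ∑ z, surv P x A t z * P z y

/-- Expected hitting time `E_x[τ_A]` of the moving target `(A s)`. -/
noncomputable def ehit {S : Type*} [Fintype S] [DecidableEq S]
    (P : Matrix S S ℝ≥0∞) (x : S) (A : ℕ → Finset S) : ℝ≥0∞ :=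
  ∑' t : ℕ, ∑ y, surv P x A t y


noncomputable def hitm {S : Type*} [Fintype S] [DecidableEq S]
    (P : Matrix S S ℝ≥0∞) (x : S) (A : ℕ → Finset S) : ℕ → ℝ≥0∞
  | 0 => if x ∈ A 0 then 1 else 0
  | s + 1 => hitm P x A s + ∑ y ∈ A (s + 1), ∑ z, surv P x A s z * P z y

lemma surv_succ_sum {S : Type*} [Fintype S] [DecidableEq S]
    (P : Matrix S S ℝ≥0∞) (x : S) (A : ℕ → Finset S) (s : ℕ) :
    ∑ y, surv P x A (s + 1) y
      = ∑ y ∈ (A (s+1))ᶜ, ∑ z, surv P x A s z * P z y := by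
  simp only [surv]
  rw [Finset.sum_ite, Finset.sum_const_zero, zero_add]
  refine Finset.sum_congr ?_ fun _ _ => rfl
  ext y; simp

lemma mass {S : Type*} [Fintype S] [DecidableEq S]
    (P : Matrix S S ℝ≥0∞) (hstoch : ∀ a, ∑ b, P a b = 1)
    (x : S) (A : ℕ → Finset S) (s : ℕ) :
    hitm P x A s + ∑ y, surv P x A s y = 1 := by
  induction s with
  | zero =>
    by_cases h : x ∈ A 0
    · have : ∀ y, surv P x A 0 y = 0 := by
        intro y; simp only [surv]
        by_cases hy : y = x <;> simp [hy, h]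
      simp [hitm, h, this]
    · have : ∑ y, surv P x A 0 y = 1 := by
        simp only [surv]
        rw [Finset.sum_eq_single x] <;> simp [h]
        intro b hb; simp [hb]
      simp [hitm, h, this]
  | succ s ih =>
    have : (∑ y ∈ A (s+1), ∑ z, surv P x A s z * P z y)
        + ∑ y, surv P x A (s+1) y = ∑ y, surv P x A s y := by
      rw [surv_succ_sum]
      rw [← Finset.sum_union (disjoint_compl_right), Finset.union_compl]
      rw [Finset.sum_comm]
      simp_rw [← Finset.mul_sum, hstoch, mul_one]
    calc hitm P x A (s+1) + ∑ y, surv P x A (s+1) y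
        = hitm P x A s + ((∑ y ∈ A (s+1), ∑ z, surv P x A s z * P z y)
            + ∑ y, surv P x A (s+1) y) := by rw [hitm]; ring
      _ = 1 := by rw [this, ih]

lemma surv_sum_anti {S : Type*} [Fintype S] [DecidableEq S]
    (P : Matrix S S ℝ≥0∞) (hstoch : ∀ a, ∑ b, P a b = 1)
    (x : S) (A : ℕ → Finset S) (s : ℕ) :
    ∑ y, surv P x A (s + 1) y ≤ ∑ y, surv P x A s y := by
  rw [surv_succ_sum]
  calc ∑ y ∈ (A (s+1))ᶜ, ∑ z, surv P x A s z * P z y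
      ≤ ∑ y, ∑ z, surv P x A s z * P z y :=
        Finset.sum_le_sum_of_subset (Finset.subset_univ _)
    _ = ∑ z, surv P x A s z := by
        rw [Finset.sum_comm]; simp_rw [← Finset.mul_sum, hstoch, mul_one]

lemma key {S : Type*} [Fintype S] [DecidableEq S]
    (P : Matrix S S ℝ≥0∞) (hstoch : ∀ a, ∑ b, P a b = 1)
    (t : ℕ) (A : Finset S) (β : ℝ≥0∞) (x : S) (B : ℕ → Finset S)
    (hB : ∀ s, s < t → B s = Finset.univ.filter
        (fun y => β < ∑ a ∈ A, (P ^ (t - s)) y a))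
    (hx0 : x ∉ B 0) :
    ∀ s, s < t →
      β * hitm P x B s + ∑ y, surv P x B s y * ∑ a ∈ A, (P ^ (t - s)) y a
        ≤ ∑ a ∈ A, (P ^ t) x a := by
  intro s
  induction s with
  | zero =>
    intro _
    have h0 : hitm P x B 0 = 0 := by simp [hitm, hx0]
    rw [h0, mul_zero, zero_add]
    have : ∑ y, surv P x B 0 y * ∑ a ∈ A, (P ^ (t - 0)) y a
        = ∑ a ∈ A, (P ^ t) x a := by
      rw [Finset.sum_eq_single x]
      · simp [surv, hx0]
      · intro b _ hb; simp [surv, hb]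
      · simp
    rw [this]
  | succ s ih =>
    intro h
    have hs : s < t := Nat.lt_of_succ_lt h
    refine le_trans ?_ (ih hs)
    set g : S → ℝ≥0∞ := fun y => ∑ z, surv P x B s z * P z y with hg
    set h' : S → ℝ≥0∞ := fun y => ∑ a ∈ A, (P ^ (t - (s + 1))) y a with hh'
    -- Chapman–Kolmogorov
    have hchap : ∀ z, ∑ a ∈ A, (P ^ (t - s)) z a = ∑ y, P z y * h' y := by
      intro z
      have hts : t - s = (t - (s + 1)) + 1 := by omega
      rw [hts, pow_succ']
      simp_rw [Matrix.mul_apply, hh']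
      rw [Finset.sum_comm]
      simp_rw [Finset.mul_sum]
    have hsum : ∑ z, surv P x B s z * ∑ a ∈ A, (P ^ (t - s)) z a
        = ∑ y, g y * h' y := by
      simp_rw [hchap, Finset.mul_sum]
      rw [Finset.sum_comm]
      refine Finset.sum_congr rfl fun y _ => ?_
      rw [hg]; simp_rw [← mul_assoc]
      rw [← Finset.sum_mul]
    rw [hsum]
    have hhit : hitm P x B (s + 1) = hitm P x B s + ∑ y ∈ B (s + 1), g y := rfl
    rw [hhit, mul_add, add_assoc]
    refine add_le_add_right ?_ (β * hitm P x B s)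
    have e1 : β * ∑ y ∈ B (s + 1), g y = ∑ y, if y ∈ B (s + 1) then β * g y else 0 := by
      rw [Finset.mul_sum]
      rw [Finset.sum_ite_mem, Finset.univ_inter]
    have e2 : ∑ y, surv P x B (s + 1) y * h' y
        = ∑ y, if y ∈ B (s + 1) then 0 else g y * h' y := by
      refine Finset.sum_congr rfl fun y _ => ?_
      by_cases hy : y ∈ B (s + 1) <;> simp [surv, hy, hg]
    rw [e1, e2, ← Finset.sum_add_distrib]
    refine Finset.sum_le_sum fun y _ => ?_
    by_cases hy : y ∈ B (s + 1)
    · simp only [hy, if_true, add_zero]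
      have : β ≤ h' y := by
        have := hB (s + 1) h ▸ hy
        rw [Finset.mem_filter] at this
        exact this.2.le
      calc β * g y ≤ h' y * g y := mul_le_mul_left this _
        _ = g y * h' y := mul_comm _ _
    · simp [hy]
theorem stmt2 {S : Type*} [Fintype S] [DecidableEq S]
    (P : Matrix S S ℝ≥0∞) (π : S → ℝ≥0∞)
    (hstoch : ∀ a, ∑ b, P a b = 1)
    (hirr : ∀ a b, ∃ k, 0 < (P ^ k) a b)
    (hstat : ∀ b, ∑ a, π a * P a b = π b) (hπ : ∑ a, π a = 1)
    (t : ℕ) (ht : 1 ≤ t) (A : Finset S) (α ε θ : ℝ≥0∞)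
    (hε : 0 < ε) (hθ0 : 0 < θ) (hθ1 : θ < 1)
    (hπA1 : (∑ a ∈ A, π a) - α ≤ 1)
    (x : S) (hx : ∑ a ∈ A, (P ^ t) x a < (∑ a ∈ A, π a) - (α + ε))
    (hθ : (∑ a ∈ A, π a) - (α + ε) < ((∑ a ∈ A, π a) - α) * (1 - θ)) :
    ∃ z : S, θ * t < ehit P z
      (fun s => if s < t then
          Finset.univ.filter
            (fun y => (∑ a ∈ A, π a) - α < ∑ a ∈ A, (P ^ (t - s)) y a)
        else Finset.univ) := by
  set β : ℝ≥0∞ := (∑ a ∈ A, π a) - α with hβ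
  set B : ℕ → Finset S := fun s => if s < t then
      Finset.univ.filter (fun y => β < ∑ a ∈ A, (P ^ (t - s)) y a)
    else Finset.univ with hBdef
  have hB : ∀ s, s < t → B s = Finset.univ.filter
      (fun y => β < ∑ a ∈ A, (P ^ (t - s)) y a) := by
    intro s hs; simp [hBdef, hs]
  have hβtop : β ≠ ∞ := ne_top_of_le_ne_top ENNReal.one_ne_top hπA1
  have hβ0 : β ≠ 0 := by
    intro h
    rw [h, zero_mul] at hθ
    exact absurd hθ (by simp)
  have hεle : (∑ a ∈ A, π a) - (α + ε) ≤ β :=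
    tsub_le_tsub_left (le_add_right le_rfl) _
  have hx0 : x ∉ B 0 := by
    rw [hB 0 (by omega), Finset.mem_filter]
    rintro ⟨-, hlt⟩
    rw [Nat.sub_zero] at hlt
    exact absurd (hlt.trans (lt_of_lt_of_le hx hεle)) (lt_irrefl β)
  have hkey := key P hstoch t A β x B hB hx0 (t - 1) (by omega)
  have hH : β * hitm P x B (t - 1) < β * (1 - θ) :=
    lt_of_le_of_lt (le_trans (le_add_right le_rfl) hkey) (lt_trans hx hθ)
  have hHlt : hitm P x B (t - 1) < 1 - θ :=
    (ENNReal.mul_lt_mul_iff_right hβ0 hβtop).mp hH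
  have hmass := mass P hstoch x B (t - 1)
  have hq : θ < ∑ y, surv P x B (t - 1) y := by
    by_contra hq
    push_neg at hq
    have h1 : (1 : ℝ≥0∞) ≤ hitm P x B (t - 1) + θ := by
      rw [← hmass]; exact add_le_add_right hq _
    have h2 : hitm P x B (t - 1) + θ < (1 - θ) + θ :=
      ENNReal.add_lt_add_right hθ1.ne_top hHlt
    rw [tsub_add_cancel_of_le hθ1.le] at h2
    exact absurd (lt_of_le_of_lt h1 h2) (lt_irrefl 1)
  have hanti : ∀ s, s ≤ t - 1 → ∑ y, surv P x B (t - 1) y ≤ ∑ y, surv P x B s y := by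
    intro s hs
    have : Antitone (fun s => ∑ y, surv P x B s y) :=
      antitone_nat_of_succ_le (fun n => surv_sum_anti P hstoch x B n)
    exact this hs
  refine ⟨x, ?_⟩
  have hsum : (t : ℝ≥0∞) * ∑ y, surv P x B (t - 1) y ≤ ehit P x B := by
    calc (t : ℝ≥0∞) * ∑ y, surv P x B (t - 1) y
        = ∑ _s ∈ Finset.range t, ∑ y, surv P x B (t - 1) y := by
          rw [Finset.sum_const, Finset.card_range, nsmul_eq_mul]
      _ ≤ ∑ s ∈ Finset.range t, ∑ y, surv P x B s y := by
          refine Finset.sum_le_sum fun s hs => hanti s ?_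
          rw [Finset.mem_range] at hs; omega
      _ ≤ ehit P x B := ENNReal.sum_le_tsum _
  refine lt_of_lt_of_le ?_ hsum
  rw [mul_comm θ (t : ℝ≥0∞)]
  refine ENNReal.mul_lt_mul_iff_right (by exact_mod_cast (by omega : t ≠ 0)) (ENNReal.natCast_ne_top t) |>.mpr hq
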